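/- If F(u,v;t) is a Laurent series in t whose coefficients are symmetric polynomials in u and v, and Y₀, Y₁ satisfy Y₀+Y₁ = x̄/t − x̄² and Y₀Y₁ = x̄ (with x̄ = 1/x), then F(Y₀,Y₁;t), when defined, is a Laurent series in t with coefficients that are polynomials in x̄, and its constant term with respect to x̄ equals F(0,0;t). -/

import Mathlib

open HahnSeries MvPolynomial

/-- The ring hom on Laurent/Hahn series induced by a ring hom on coefficients. -/
noncomputable def hahnMapRingHom {R S : Type*} [CommRing R] [CommRing S] (f : R →+* S) :
    HahnSeries ℤ R →+* HahnSeries ℤ S where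
  toFun a := a.map f
  map_one' := HahnSeries.map_one f.toMonoidWithZeroHom
  map_mul' x y := HahnSeries.map_mul (f : R →ₙ+* S)
  map_zero' := by ext g; simp
  map_add' x y := by ext g; simp

theorem hahnMapRingHom_coeff {R S : Type*} [CommRing R] [CommRing S] (f : R →+* S)
    (a : HahnSeries ℤ R) (g : ℤ) : (hahnMapRingHom f a).coeff g = f (a.coeff g) := rfl

/-- Symmetric functions of the kernel roots: if `F(u,v;t)` is a (Laurent-series-in-`t`)-
combination of symmetric polynomials in `u,v` (formalized as a polynomial in `u,v` with
Laurent series coefficients, invariant under swapping the variables), and `Y₀, Y₁`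
satisfy `Y₀+Y₁ = x̄/t − x̄²` and `Y₀Y₁ = x̄`, then `F(Y₀,Y₁;t)` is a Laurent series in `t`
with coefficients polynomial in `x̄`, whose constant term with respect to `x̄` is
`F(0,0;t)`.  Here `ψ` embeds Laurent series in `t` with coefficients in `ℚ[x̄]` into the
ambient ring `B` containing `Y₀, Y₁`, and `φ` embeds Laurent series in `t` with rational
coefficients, compatibly with `ψ`. -/
theorem symmetric_kernel_lemma
    (B : Type*) [CommRing B]
    (φ : LaurentSeries ℚ →+* B)
    (ψ : LaurentSeries (Polynomial ℚ) →+* B)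
    (hcompat : ∀ a : LaurentSeries ℚ, ψ (a.map (Polynomial.C : ℚ →+* Polynomial ℚ)) = φ a)
    (Y₀ Y₁ : B)
    (hsum : Y₀ + Y₁ = ψ (HahnSeries.single (-1 : ℤ) Polynomial.X
      - HahnSeries.single (0 : ℤ) (Polynomial.X ^ 2)))
    (hprod : Y₀ * Y₁ = ψ (HahnSeries.single (0 : ℤ) Polynomial.X))
    (F : MvPolynomial (Fin 2) (LaurentSeries ℚ))
    (hsym : MvPolynomial.rename (Equiv.swap (0 : Fin 2) 1) F = F) :
    ∃ G : LaurentSeries (Polynomial ℚ),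
      MvPolynomial.eval₂ φ ![Y₀, Y₁] F = ψ G ∧
      ∀ n : ℤ, (G.coeff n).coeff 0 = (MvPolynomial.eval (0 : Fin 2 → LaurentSeries ℚ) F).coeff n := by
  classical
  -- F is symmetric
  have hFsym : F.IsSymmetric := by
    intro e
    have he : e = 1 ∨ e = Equiv.swap (0 : Fin 2) 1 := by revert e; decide
    rcases he with rfl | rfl
    · simp only [Equiv.Perm.coe_one]
      exact MvPolynomial.rename_id_apply (R := LaurentSeries ℚ) F
    · exact hsym
  -- fundamental theorem of symmetric polynomials (n = 2)
  obtain ⟨P, hP⟩ := (MvPolynomial.esymmAlgHom_fin_bijective (R := LaurentSeries ℚ) 2).2 ⟨F, hFsym⟩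
  have hF : F = eval₂ C (fun i : Fin 2 => esymm (Fin 2) (LaurentSeries ℚ) (i + 1)) P := by
    have := congrArg Subtype.val hP
    rw [esymmAlgHom_apply] at this
    rw [aeval_def, algebraMap_eq] at this
    exact this.symm
  have he1 : esymm (Fin 2) (LaurentSeries ℚ) 1 = X 0 + X 1 := by
    simp [esymm_one, Fin.sum_univ_two]
  have he2 : esymm (Fin 2) (LaurentSeries ℚ) 2 = X 0 * X 1 := by
    rw [esymm,
      show ((Finset.univ : Finset (Fin 2)).powersetCard 2) = {Finset.univ} from by decide]
    simp [Fin.prod_univ_two]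
  -- the building blocks
  set S : LaurentSeries (Polynomial ℚ) := HahnSeries.single (-1 : ℤ) Polynomial.X
      - HahnSeries.single (0 : ℤ) (Polynomial.X ^ 2) with hS
  set Pr : LaurentSeries (Polynomial ℚ) := HahnSeries.single (0 : ℤ) Polynomial.X with hPr
  set θ : LaurentSeries ℚ →+* LaurentSeries (Polynomial ℚ) :=
    hahnMapRingHom (Polynomial.C : ℚ →+* Polynomial ℚ) with hθ
  refine ⟨eval₂ θ ![S, Pr] P, ?_, ?_⟩
  · -- main identity
    have hψθ : ψ.comp θ = φ := by
      ext a
      exact hcompat a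
    have h1 : ψ (eval₂ θ ![S, Pr] P) = eval₂ φ (ψ ∘ ![S, Pr]) P := by
      rw [eval₂_comp_left ψ θ ![S, Pr] P, hψθ]
    have h2 := eval₂_comp_left (eval₂Hom φ ![Y₀, Y₁]) C
      (fun i : Fin 2 => esymm (Fin 2) (LaurentSeries ℚ) (i + 1)) P
    simp only [coe_eval₂Hom] at h2
    have hCcomp : (eval₂Hom φ ![Y₀, Y₁]).comp C = φ := by
      ext a; simp
    rw [h1, hF, h2, hCcomp]
    congr 1
    funext i
    fin_cases i
    · show eval₂ φ ![Y₀, Y₁] (esymm (Fin 2) (LaurentSeries ℚ) ((0 : Fin 2) + 1)) = ψ S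
      rw [show ((0 : Fin 2) : ℕ) + 1 = 1 from rfl, he1, ← hsum]
      simp
    · show eval₂ φ ![Y₀, Y₁] (esymm (Fin 2) (LaurentSeries ℚ) ((1 : Fin 2) + 1)) = ψ Pr
      rw [show ((1 : Fin 2) : ℕ) + 1 = 2 from rfl, he2, ← hprod]
      simp
  · -- constant-term identity
    intro n
    set ε : LaurentSeries (Polynomial ℚ) →+* LaurentSeries ℚ :=
      hahnMapRingHom (Polynomial.evalRingHom (0 : ℚ)) with hε
    have hcoeff : ∀ (a : LaurentSeries (Polynomial ℚ)) (m : ℤ),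
        (ε a).coeff m = (a.coeff m).coeff 0 := by
      intro a m
      simp [hε, Polynomial.coeff_zero_eq_eval_zero, hahnMapRingHom_coeff]
    have hεθ : ε.comp θ = RingHom.id (LaurentSeries ℚ) := by
      refine RingHom.ext fun a => HahnSeries.ext (funext fun m => ?_)
      simp [hε, hθ, hahnMapRingHom_coeff]
    have hεS : ε S = 0 := by
      ext m
      simp [hcoeff, hS, HahnSeries.coeff_sub, HahnSeries.coeff_single]
      split_ifs <;> simp
    have hεPr : ε Pr = 0 := by
      ext m
      simp [hcoeff, hPr, HahnSeries.coeff_single]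
      split_ifs <;> simp
    have hεG : ε (eval₂ θ ![S, Pr] P) = eval₂ (RingHom.id (LaurentSeries ℚ)) (fun _ => 0) P := by
      rw [eval₂_comp_left ε θ ![S, Pr] P, hεθ]
      congr 1
      funext i
      fin_cases i
      · simpa using hεS
      · simpa using hεPr
    have hF0 : eval (0 : Fin 2 → (LaurentSeries ℚ)) F = eval₂ (RingHom.id (LaurentSeries ℚ)) (fun _ => 0) P := by
      have h2 := eval₂_comp_left (eval₂Hom (RingHom.id (LaurentSeries ℚ)) (0 : Fin 2 → (LaurentSeries ℚ))) C
        (fun i : Fin 2 => esymm (Fin 2) (LaurentSeries ℚ) (i + 1)) P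
      simp only [coe_eval₂Hom] at h2
      have hc : (eval₂Hom (RingHom.id (LaurentSeries ℚ)) (0 : Fin 2 → (LaurentSeries ℚ))).comp C = RingHom.id (LaurentSeries ℚ) := by
        ext a; simp
      have heval : eval (0 : Fin 2 → (LaurentSeries ℚ)) F
          = (eval₂Hom (RingHom.id (LaurentSeries ℚ)) (0 : Fin 2 → (LaurentSeries ℚ))) F := rfl
      rw [heval, hF, coe_eval₂Hom, h2, hc]
      congr 1
      funext i
      fin_cases i
      · show (eval₂Hom (RingHom.id (LaurentSeries ℚ)) (0 : Fin 2 → (LaurentSeries ℚ))) (esymm (Fin 2) (LaurentSeries ℚ) ((0 : Fin 2) + 1)) = 0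
        rw [show ((0 : Fin 2) : ℕ) + 1 = 1 from rfl, he1]
        show eval₂ (RingHom.id (LaurentSeries ℚ)) 0 (X 0 + X 1) = 0
        rw [eval₂_add, eval₂_X, eval₂_X]
        simp only [Pi.zero_apply, add_zero]
      · show (eval₂Hom (RingHom.id (LaurentSeries ℚ)) (0 : Fin 2 → (LaurentSeries ℚ))) (esymm (Fin 2) (LaurentSeries ℚ) ((1 : Fin 2) + 1)) = 0
        rw [show ((1 : Fin 2) : ℕ) + 1 = 2 from rfl, he2]
        show eval₂ (RingHom.id (LaurentSeries ℚ)) 0 (X 0 * X 1) = 0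
        rw [eval₂_mul, eval₂_X, eval₂_X]
        simp only [Pi.zero_apply, mul_zero]
    rw [← hcoeff, hεG, hF0]
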